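/- Let H be a real Hilbert space, A ⊆ H a nonempty bounded symmetric set (A = −A), f : H → ℝ convex and Fréchet differentiable, δ ∈ (0,1], ρ > 0, and C > 0. Let x⋆ ∈ ρ·conv(A) satisfy f(x⋆) ≤ f(w) for all w ∈ ρ·conv(A). Let (x_t)_{t≥0} and (z_t)_{t≥0} satisfy: x_t ∈ ρ·conv(A) for every t; z_t ∈ A with ⟪∇f(x_t), z_t⟫ ≤ δ·inf_{z∈A} ⟪∇f(x_t), z⟫ (a δ-approximate matching-pursuit LMO output); and the per-iteration descent guarantee f(x_{t+1}) ≤ f(x_t) + γ·⟪∇f(x_t), ρ z_t⟫ + (γ²/2)·C for all γ ∈ [0,1] (which holds in particular for the affine-invariant generalized matching pursuit update x_{t+1} = x_t + (ρ²⟪−∇f(x_t), z_t⟫/C)·z_t under a curvature bound C over ρ·conv(A)). Then for every t ≥ 0, f(x_t) − f(x⋆) ≤ 4·((2/δ)·C + ε₀)/(δ·t + 4), where ε₀ := f(x₀) − f(x⋆). -/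

import Mathlib

set_option maxHeartbeats 1000000


open scoped RealInnerProductSpace Pointwise

/-- First-order condition: a convex differentiable function lies above its tangent. -/
lemma grad_lower_bound {H : Type*} [NormedAddCommGroup H] [InnerProductSpace ℝ H]
    [CompleteSpace H] {f : H → ℝ} {f' : H → H}
    (hconv : ConvexOn ℝ Set.univ f)
    (hdiff : ∀ w : H, HasGradientAt f (f' w) w) (a b : H) :
    f a + ⟪f' a, b - a⟫ ≤ f b := by
  set g : ℝ → ℝ := fun s => f (s • (b - a) + a) with hg
  have hgconv : ConvexOn ℝ Set.univ g := by
    have := hconv.comp_affineMap (AffineMap.lineMap a b : ℝ →ᵃ[ℝ] H)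
    simpa [AffineMap.lineMap_apply, Function.comp_def, hg] using this
  have hc : HasDerivAt (fun s : ℝ => s • (b - a) + a) (b - a) 0 := by
    simpa using ((hasDerivAt_id (0:ℝ)).smul_const (b - a)).add_const a
  have hgd : HasDerivAt g ⟪f' a, b - a⟫ 0 := by
    have h1 := (hdiff ((0:ℝ) • (b - a) + a)).hasFDerivAt.comp_hasDerivAt 0 hc
    simpa [hg, Function.comp_def] using h1
  have hs := hgconv.le_slope_of_hasDerivAt (Set.mem_univ (0:ℝ)) (Set.mem_univ (1:ℝ))
    one_pos hgd
  have : ⟪f' a, b - a⟫ ≤ g 1 - g 0 := by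
    simpa [slope_def_field] using hs
  have hg0 : g 0 = f a := by simp [hg]
  have hg1 : g 1 = f b := by simp [hg]
  rw [hg0, hg1] at this
  linarith

/-- Sublinear convergence of the Affine Invariant Generalized Matching Pursuit algorithm under
a curvature bound `C` (Theorem 7 / `thm:sublinearMPAffineInvariant`). -/
theorem affineInvariantMatchingPursuit_sublinear_convergence
    {H : Type*} [NormedAddCommGroup H] [InnerProductSpace ℝ H] [CompleteSpace H]
    (A : Set H) (hA : A.Nonempty) (hAbdd : Bornology.IsBounded A)
    (hsym : A = -A)
    (f : H → ℝ) (f' : H → H)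
    (hconv : ConvexOn ℝ Set.univ f)
    (hdiff : ∀ w : H, HasGradientAt f (f' w) w)
    (δ : ℝ) (hδ : δ ∈ Set.Ioc (0:ℝ) 1)
    (ρ : ℝ) (hρ : 0 < ρ)
    (C : ℝ) (hC : 0 < C)
    (xstar : H) (hxstar : xstar ∈ ρ • convexHull ℝ A)
    (hmin : ∀ w ∈ ρ • convexHull ℝ A, f xstar ≤ f w)
    (x z : ℕ → H)
    (hxmem : ∀ t, x t ∈ ρ • convexHull ℝ A)
    (hzA : ∀ t, z t ∈ A)
    (hlmo : ∀ t, ⟪f' (x t), z t⟫ ≤ δ * sInf ((fun w => ⟪f' (x t), w⟫) '' A))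
    (hdescent : ∀ t, ∀ γ ∈ Set.Icc (0:ℝ) 1,
        f (x (t + 1)) ≤ f (x t) + γ * ⟪f' (x t), ρ • z t⟫ + γ ^ 2 / 2 * C) :
    ∀ t : ℕ, f (x t) - f xstar ≤
      4 * ((2 / δ) * C + (f (x 0) - f xstar)) / (δ * t + 4) := by
  obtain ⟨hδ0, hδ1⟩ := hδ
  -- bound on norms of elements of A
  obtain ⟨R, hR⟩ := hAbdd.exists_norm_le
  -- h t : optimality gap
  set h : ℕ → ℝ := fun t => f (x t) - f xstar with hh
  have hh0 : ∀ t, 0 ≤ h t := fun t => sub_nonneg.2 (hmin _ (hxmem t))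
  clear_value h
  -- key per-step bound on the LMO direction
  have hkey : ∀ t, ⟪f' (x t), ρ • z t⟫ ≤ -(δ / 2) * h t := by
    intro t
    set g : H := f' (x t) with hgdef
    set S : Set ℝ := (fun w => ⟪g, w⟫) '' A with hS
    have hSne : S.Nonempty := hA.image _
    have hSbdd : BddAbove S := by
      refine ⟨‖g‖ * R, ?_⟩
      rintro y ⟨w, hw, rfl⟩
      calc ⟪g, w⟫ ≤ ‖g‖ * ‖w‖ := real_inner_le_norm g w
        _ ≤ ‖g‖ * R := by
            have := hR w hw
            nlinarith [norm_nonneg g, norm_nonneg w]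
    set M : ℝ := sSup S with hM
    clear_value M
    have hSsym : ∀ y ∈ S, -y ∈ S := by
      rintro y ⟨w, hw, rfl⟩
      refine ⟨-w, ?_, by simp⟩
      rw [hsym]; exact Set.neg_mem_neg.2 hw
    have hSbddBelow : BddBelow S := by
      obtain ⟨B, hB⟩ := hSbdd
      refine ⟨-B, fun y hy => ?_⟩
      have := hB (hSsym y hy)
      linarith
    have hInfle : sInf S ≤ -M := by
      have : M ≤ -sInf S := by
        rw [hM]
        apply csSup_le hSne
        intro y hy
        have := csInf_le hSbddBelow (hSsym y hy)
        linarith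
      linarith
    -- elements of the hull have inner product at most M
    have hhullle : ∀ u ∈ convexHull ℝ A, ⟪g, u⟫ ≤ M := by
      intro u hu
      have hsub : convexHull ℝ A ⊆ {w : H | ⟪g, w⟫ ≤ M} := by
        apply convexHull_min
        · intro w hw
          rw [Set.mem_setOf_eq, hM]
          exact le_csSup hSbdd ⟨w, hw, rfl⟩
        · exact convex_halfSpace_le ((innerSL ℝ g).toLinearMap.isLinear) M
      exact hsub hu
    -- gap bound : h t ≤ 2 ρ M
    obtain ⟨u, hu, hxu⟩ := hxmem t
    obtain ⟨v, hv, hxv⟩ := hxstar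
    have hgrad := grad_lower_bound hconv hdiff (x t) xstar
    have hgap : h t ≤ ⟪g, x t - xstar⟫ := by
      have hsumz : ⟪g, x t - xstar⟫ + ⟪g, xstar - x t⟫ = 0 := by
        rw [← inner_add_right]; simp
      simp only [hh]; linarith
    have hnegv : ⟪g, -v⟫ ≤ M := by
      apply hhullle
      have : -v ∈ -convexHull ℝ A := Set.neg_mem_neg.2 hv
      rwa [← convexHull_neg, ← hsym] at this
    have hinner : ⟪g, x t - xstar⟫ = ρ * ⟪g, u⟫ + ρ * ⟪g, -v⟫ := by
      rw [← hxu, ← hxv]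
      rw [inner_sub_right, real_inner_smul_right, real_inner_smul_right, inner_neg_right]
      ring
    have hgap2 : h t ≤ 2 * ρ * M := by
      have h1 := hhullle u hu
      have h2 := hnegv
      calc h t ≤ ⟪g, x t - xstar⟫ := hgap
        _ = ρ * ⟪g, u⟫ + ρ * ⟪g, -v⟫ := hinner
        _ ≤ 2 * ρ * M := by nlinarith
    -- conclude
    have hlmo' := hlmo t
    have hz : ⟪g, z t⟫ ≤ δ * (-M) := by
      calc ⟪g, z t⟫ ≤ δ * sInf S := hlmo'
        _ ≤ δ * (-M) := by nlinarith
    have : ⟪g, ρ • z t⟫ = ρ * ⟪g, z t⟫ := real_inner_smul_right g _ ρ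
    rw [this]
    have h1 : ρ * ⟪g, z t⟫ ≤ ρ * (δ * -M) := mul_le_mul_of_nonneg_left hz (le_of_lt hρ)
    have h2 : δ * h t ≤ δ * (2 * ρ * M) := mul_le_mul_of_nonneg_left hgap2 (le_of_lt hδ0)
    nlinarith [hh0 t]
  -- recursion
  have hrec : ∀ t, ∀ γ ∈ Set.Icc (0:ℝ) 1,
      h (t + 1) ≤ (1 - γ * δ / 2) * h t + γ ^ 2 / 2 * C := by
    intro t γ hγ
    have hd := hdescent t γ hγ
    have hk := hkey t
    have : γ * ⟪f' (x t), ρ • z t⟫ ≤ γ * (-(δ / 2) * h t) := by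
      apply mul_le_mul_of_nonneg_left hk hγ.1
    simp only [hh] at *
    nlinarith
  -- induction
  set K : ℝ := (2 / δ) * C + h 0 with hK
  clear_value K
  have hK0 : 0 < K := by
    have : 0 < (2 / δ) * C := by positivity
    have := hh0 0
    simp only [hK]; linarith
  suffices hmain : ∀ t : ℕ, h t ≤ 4 * K / (δ * t + 4) by
    intro t
    have := hmain t
    simp only [hK, hh] at this
    exact this
  intro t
  induction t with
  | zero =>
      simp only [Nat.cast_zero, mul_zero, zero_add]
      have : 0 < (2 / δ) * C := by positivity
      rw [show (4:ℝ) * K / 4 = K by ring, hK]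
      linarith
  | succ t ih =>
      set a : ℝ := δ * t + 4 with ha
      clear_value a
      have ha4 : (4:ℝ) ≤ a := by
        have : (0:ℝ) ≤ δ * t := by positivity
        rw [ha]; linarith
      have ha0 : (0:ℝ) < a := by linarith
      set γ : ℝ := 4 / a with hγdef
      clear_value γ
      have hγmem : γ ∈ Set.Icc (0:ℝ) 1 := by
        constructor
        · rw [hγdef]; positivity
        · rw [hγdef, div_le_one ha0]; linarith
      have hstep := hrec t γ hγmem
      have hcoeff : 0 ≤ 1 - γ * δ / 2 := by
        have : γ * δ ≤ 1 * 1 := by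
          apply mul_le_mul hγmem.2 hδ1 (le_of_lt hδ0) (by linarith [hγmem.1])
        linarith
      have hmono : (1 - γ * δ / 2) * h t ≤ (1 - γ * δ / 2) * (4 * K / a) :=
        mul_le_mul_of_nonneg_left ih hcoeff
      have hδK : 2 * C ≤ δ * K := by
        have : δ * ((2 / δ) * C) = 2 * C := by field_simp
        have h0 := hh0 0
        simp only [hK]
        nlinarith [mul_nonneg (le_of_lt hδ0) h0]
      -- goal denominator
      have hcast : δ * ((t:ℕ)+1 : ℕ) + 4 = a + δ := by
        rw [ha]; push_cast; ring
      rw [hcast]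
      have haδ : 0 < a + δ := by linarith
      rw [le_div_iff₀ haδ]
      -- h(t+1) ≤ (1 - 2δ/a)(4K/a) + 8C/a²
      have hγval : γ ^ 2 / 2 * C = 8 * C / a ^ 2 := by
        rw [hγdef]; field_simp; ring
      have hγδ : γ * δ / 2 = 2 * δ / a := by rw [hγdef]; field_simp; ring
      have hfinal : h (t+1) ≤ (1 - 2 * δ / a) * (4 * K / a) + 8 * C / a ^ 2 := by
        calc h (t+1) ≤ (1 - γ * δ / 2) * h t + γ ^ 2 / 2 * C := hstep
          _ ≤ (1 - γ * δ / 2) * (4 * K / a) + γ ^ 2 / 2 * C := by linarith [hmono]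
          _ = (1 - 2 * δ / a) * (4 * K / a) + 8 * C / a ^ 2 := by rw [hγδ, hγval]
      have hexp : (1 - 2 * δ / a) * (4 * K / a) + 8 * C / a ^ 2
          = (4 * K * (a - 2*δ) + 8 * C) / a ^ 2 := by
        field_simp
      rw [hexp] at hfinal
      -- (4K(a-2δ) + 8C)/a² ≤ 4K/(a+δ)
      have hnum : 4 * K * (a - 2*δ) + 8 * C ≤ 4 * K * (a - δ) := by nlinarith
      have h2 : h (t+1) ≤ 4 * K * (a - δ) / a ^ 2 := by
        calc h (t+1) ≤ (4 * K * (a - 2*δ) + 8 * C) / a ^ 2 := hfinal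
          _ ≤ 4 * K * (a - δ) / a ^ 2 := by gcongr
      -- finish: 4K(a-δ)(a+δ) ≤ 4K a²
      have h3 : 4 * K * (a - δ) / a ^ 2 * (a + δ) ≤ 4 * K := by
        rw [div_mul_eq_mul_div, div_le_iff₀ (by positivity)]
        have hring : 4 * K * (a - δ) * (a + δ) = 4 * K * a ^ 2 - 4 * K * δ ^ 2 := by ring
        have hpos : 0 ≤ 4 * K * δ ^ 2 := by positivity
        linarith
      calc h (t+1) * (a + δ) ≤ 4 * K * (a - δ) / a ^ 2 * (a + δ) :=
            mul_le_mul_of_nonneg_right h2 (le_of_lt haδ)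
        _ ≤ 4 * K := h3
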